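/- For all reals 0 ≤ v_0 ≤ v_1, the pure local strategy profile for NC_00(C_5) in which players 0, 1, 2, 3 each use the NOT function (f_i(x) = 1 − x) and player 4 uses the constant function 1 is a Nash equilibrium of NC_00(C_5) with the uniform type distribution; under this profile the expected payoff of each of players 0, 1, 2, 3 equals (2v_0 + 3v_1)/6 and the expected payoff of player 4 equals 5v_1/6. -/

import Mathlib

open Finset

/-- The 6 questions/types of the game on the 5-cycle: `none` is `Tₐ = 11111`;
`some i` is the question `Tᵢ` giving input bit 1 to player `i` and 0 to the others. -/
abbrev C5Type := Option (ZMod 5)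

/-- Input (type) bit of player `j` in question `t` of `MCG(C₅)`/`NC₀₀(C₅)`. -/
def inputBit : C5Type → ZMod 5 → ZMod 2
  | none, _ => 1
  | some i, j => if j = i then 1 else 0

/-- The involved set of question `t`: all five players for `Tₐ`;
`{i-1, i, i+1}` for `Tᵢ`. -/
def involvedSet : C5Type → Finset (ZMod 5)
  | none => Finset.univ
  | some i => {i - 1, i, i + 1}

/-- The target parity bit of question `t`: `1` for `Tₐ` and `0` for each `Tᵢ`. -/
def targetBit : C5Type → ZMod 2
  | none => 1
  | some _ => 0

/-- Payoff of player `j` on (answer profile `s`, type `t`) in `NC₀₀(C₅)`: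
`v_{s j}` if `s` wins on `t`, else `0`. -/
noncomputable def payoffOf (v0 v1 : ℝ) (j : ZMod 5) (s : ZMod 5 → ZMod 2)
    (t : C5Type) : ℝ :=
  if ∑ k ∈ involvedSet t, s k = targetBit t then (if s j = 1 then v1 else v0) else 0

/-- Expected payoff of player `j` under the pure local strategy profile `f`
(player `i` answers `f i b` on type bit `b`), with the type uniform on the 6 types. -/
noncomputable def pureUtil (v0 v1 : ℝ) (f : ZMod 5 → ZMod 2 → ZMod 2) (j : ZMod 5) : ℝ :=
  (∑ t : C5Type, payoffOf v0 v1 j (fun i => f i (inputBit t i)) t) / 6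

/-- The pure local strategy profile `f` is a Nash equilibrium of `NC₀₀(C₅)` with
the uniform type distribution: no player can strictly increase their expected
payoff by unilaterally replacing their local function. -/
def IsNashEq (v0 v1 : ℝ) (f : ZMod 5 → ZMod 2 → ZMod 2) : Prop :=
  ∀ (i : ZMod 5) (g : ZMod 2 → ZMod 2),
    pureUtil v0 v1 (Function.update f i g) i ≤ pureUtil v0 v1 f i

/-- The profile `(NOT, NOT, NOT, NOT, 1)`: players `0,1,2,3` answer the negation
of their type bit (`x ↦ x + 1` in `ZMod 2`), player `4` always answers `1`. -/
def notNotNotNotOne : ZMod 5 → ZMod 2 → ZMod 2 :=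
  fun i x => if i = 4 then 1 else x + 1

set_option maxHeartbeats 1000000

/-- **The profile `(NOT, NOT, NOT, NOT, 1)` is a Nash equilibrium of `NC₀₀(C₅)`.**
For all `0 ≤ v0 ≤ v1` it is a Nash equilibrium under the uniform type
distribution; players `0,1,2,3` each get expected payoff `(2 v0 + 3 v1)/6` and
player `4` gets `5 v1 / 6`. -/
theorem notNotNotNotOne_nash_NC00 (v0 v1 : ℝ) (hv0 : 0 ≤ v0) (hv01 : v0 ≤ v1) :
    IsNashEq v0 v1 notNotNotNotOne ∧
    (∀ i : ZMod 5, i ≠ 4 → pureUtil v0 v1 notNotNotNotOne i = (2 * v0 + 3 * v1) / 6) ∧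
    pureUtil v0 v1 notNotNotNotOne 4 = 5 * v1 / 6 := by
  have zmod2cases : ∀ x : ZMod 2, x = 0 ∨ x = 1 := by decide
  refine ⟨?_, ?_, ?_⟩
  · intro i g
    rcases zmod2cases (g 0) with h0 | h0 <;>
    rcases zmod2cases (g 1) with h1 | h1 <;>
    rw [show g = fun x => if x = 0 then g 0 else g 1 from
      funext fun x => by rcases zmod2cases x with h | h <;> simp [h], h0, h1] <;>
    fin_cases i <;>
    · simp only [pureUtil, Fintype.sum_option]
      simp (config := { decide := true }) [payoffOf, notNotNotNotOne, Function.update_apply,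
        show (Finset.univ : Finset (ZMod 5)) = {0,1,2,3,4} from by decide,
        Finset.sum_insert, involvedSet, targetBit, inputBit]
      try linarith
  · intro i hi
    fin_cases i <;> [skip; skip; skip; skip; exact absurd rfl hi] <;> simp_all <;>
    · simp only [pureUtil, Fintype.sum_option]
      simp (config := { decide := true }) [payoffOf, notNotNotNotOne,
        show (Finset.univ : Finset (ZMod 5)) = {0,1,2,3,4} from by decide,
        Finset.sum_insert, involvedSet, targetBit, inputBit]
      ring
  · simp only [pureUtil, Fintype.sum_option]
    simp (config := { decide := true }) [payoffOf, notNotNotNotOne,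
      show (Finset.univ : Finset (ZMod 5)) = {0,1,2,3,4} from by decide,
      Finset.sum_insert, involvedSet, targetBit, inputBit]
    ring
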